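/- arXiv:2007.09694 — 5 statements merged into one kernel-verified Lean document; each statement's English description precedes it below -/
import Mathlib

section
/- The total length of the quantised interval converges to π as the deformation parameter tends to 1: lim_{q→1⁻} ∑_{k=0}^∞ (1−q²) q^k / √(1 − q^{2(k+1)}) = π. Equivalently, with the notation of the metric d_q, lim_{q→1⁻} d_q(0,1) = π. -/
open Real Filter

private lemma telescope_hasSum (f : ℕ → ℝ) (hmono : ∀ n, f (n + 1) ≤ f n)
    (h0 : Tendsto f atTop (nhds 0)) :
    HasSum (fun n => f n - f (n + 1)) (f 0) := by
  rw [hasSum_iff_tendsto_nat_of_nonneg (fun i => sub_nonneg.2 (hmono i))]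
  simp only [Finset.sum_range_sub' f]
  simpa using tendsto_const_nhds.sub h0

private lemma arcsin_ge (a b : ℝ) (h0 : 0 ≤ a) (hab : a ≤ b) (hb : b ≤ 1) (ha1 : a < 1) :
    (b - a) / Real.sqrt (1 - a ^ 2) ≤ Real.arcsin b - Real.arcsin a := by
  set c := Real.sqrt (1 - a ^ 2) with hc
  have hcpos : 0 < c := Real.sqrt_pos.2 (by nlinarith)
  have hmono : MonotoneOn (fun x => Real.arcsin x - x / c) (Set.Icc a b) := by
    apply monotoneOn_of_deriv_nonneg (convex_Icc a b)
    · exact (Real.continuous_arcsin.sub (continuous_id.div_const c)).continuousOn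
    · intro x hx
      rw [interior_Icc] at hx
      have hx1 : x < 1 := lt_of_lt_of_le hx.2 hb
      have hxm1 : (-1 : ℝ) < x := by linarith [hx.1]
      exact ((Real.differentiableAt_arcsin.2 ⟨by linarith, by linarith⟩).sub
        (differentiableAt_fun_id.div_const c)).differentiableWithinAt
    · intro x hx
      rw [interior_Icc] at hx
      have hx0 : 0 < x := lt_of_le_of_lt h0 hx.1
      have hx1 : x < 1 := lt_of_lt_of_le hx.2 hb
      have hdiff : DifferentiableAt ℝ Real.arcsin x :=
        Real.differentiableAt_arcsin.2 ⟨by linarith, by linarith⟩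
      have hd : deriv (fun y : ℝ => y / c) x = 1 / c := by
        simp [div_eq_mul_inv]
      rw [deriv_fun_sub hdiff (differentiableAt_fun_id.div_const c), Real.deriv_arcsin, hd]
      have hsx : 0 < Real.sqrt (1 - x ^ 2) := Real.sqrt_pos.2 (by nlinarith)
      have hle : Real.sqrt (1 - x ^ 2) ≤ c := by
        rw [hc]
        exact Real.sqrt_le_sqrt (by nlinarith [hx.1])
      have : 1 / c ≤ 1 / Real.sqrt (1 - x ^ 2) := one_div_le_one_div_of_le hsx hle
      linarith
  have h := hmono (Set.left_mem_Icc.2 hab) (Set.right_mem_Icc.2 hab) hab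
  simp only at h
  have : (b - a) / c = b / c - a / c := by ring
  linarith [h, this.ge, this.le]

private lemma arcsin_le (a b : ℝ) (h0 : 0 ≤ a) (hab : a ≤ b) (hb : b < 1) :
    Real.arcsin b - Real.arcsin a ≤ (b - a) / Real.sqrt (1 - b ^ 2) := by
  set c := Real.sqrt (1 - b ^ 2) with hc
  have hb0 : 0 ≤ b := le_trans h0 hab
  have hcpos : 0 < c := Real.sqrt_pos.2 (by nlinarith)
  have hmono : MonotoneOn (fun x => x / c - Real.arcsin x) (Set.Icc a b) := by
    apply monotoneOn_of_deriv_nonneg (convex_Icc a b)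
    · exact ((continuous_id.div_const c).sub Real.continuous_arcsin).continuousOn
    · intro x hx
      rw [interior_Icc] at hx
      have hx1 : x < 1 := lt_trans hx.2 hb
      have hxm1 : (-1 : ℝ) < x := by linarith [hx.1]
      exact ((differentiableAt_fun_id.div_const c).sub
        (Real.differentiableAt_arcsin.2 ⟨by linarith, by linarith⟩)).differentiableWithinAt
    · intro x hx
      rw [interior_Icc] at hx
      have hx0 : 0 < x := lt_of_le_of_lt h0 hx.1
      have hx1 : x < 1 := lt_trans hx.2 hb
      have hdiff : DifferentiableAt ℝ Real.arcsin x :=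
        Real.differentiableAt_arcsin.2 ⟨by linarith, by linarith⟩
      have hd : deriv (fun y : ℝ => y / c) x = 1 / c := by
        simp [div_eq_mul_inv]
      rw [deriv_fun_sub (differentiableAt_fun_id.div_const c) hdiff, Real.deriv_arcsin, hd]
      have hle : c ≤ Real.sqrt (1 - x ^ 2) := by
        rw [hc]
        exact Real.sqrt_le_sqrt (by nlinarith [hx.2])
      have : 1 / Real.sqrt (1 - x ^ 2) ≤ 1 / c := one_div_le_one_div_of_le hcpos hle
      linarith
  have h := hmono (Set.left_mem_Icc.2 hab) (Set.right_mem_Icc.2 hab) hab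
  simp only at h
  have : (b - a) / c = b / c - a / c := by ring
  linarith [h, this.ge, this.le]

private lemma bounds_aux (q : ℝ) (hq : q ∈ Set.Ioo (0 : ℝ) 1) :
    ((1 + q) / q) * Real.arcsin q ≤
      (∑' k : ℕ, (1 - q ^ 2) * q ^ k / Real.sqrt (1 - q ^ (2 * (k + 1)))) ∧
    (∑' k : ℕ, (1 - q ^ 2) * q ^ k / Real.sqrt (1 - q ^ (2 * (k + 1)))) ≤
      (1 + q) * (Real.pi / 2) := by
  obtain ⟨hq0, hq1⟩ := hq
  set T : ℕ → ℝ := fun k => (1 - q ^ 2) * q ^ k / Real.sqrt (1 - q ^ (2 * (k + 1))) with hT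
  have hexp : ∀ k : ℕ, q ^ (2 * (k + 1)) = (q ^ (k + 1)) ^ 2 := by
    intro k; rw [mul_comm, pow_mul]
  have hpk1 : ∀ k : ℕ, q ^ (k + 1) < 1 := fun k => pow_lt_one₀ hq0.le hq1 k.succ_ne_zero
  have hpk1' : ∀ k : ℕ, 0 < q ^ (k + 1) := fun k => pow_pos hq0 _
  have hple : ∀ k : ℕ, q ^ (k + 1) ≤ q ^ k :=
    fun k => pow_le_pow_of_le_one hq0.le hq1.le (Nat.le_succ k)
  have hple1 : ∀ k : ℕ, q ^ k ≤ 1 := fun k => pow_le_one₀ hq0.le hq1.le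
  have hsqrtpos : ∀ k : ℕ, 0 < Real.sqrt (1 - (q ^ (k + 1)) ^ 2) := by
    intro k
    exact Real.sqrt_pos.2 (by nlinarith [hpk1 k, hpk1' k])
  -- upper pointwise bound
  have hupper : ∀ k : ℕ, T k ≤ (1 + q) * (Real.arcsin (q ^ k) - Real.arcsin (q ^ (k + 1))) := by
    intro k
    have harc := arcsin_ge (q ^ (k + 1)) (q ^ k) (hpk1' k).le (hple k) (hple1 k) (hpk1 k)
    have hTk : T k = (1 + q) * ((q ^ k - q ^ (k + 1)) / Real.sqrt (1 - (q ^ (k + 1)) ^ 2)) := by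
      rw [hT]; simp only; rw [hexp k, ← mul_div_assoc]
      congr 1; ring
    rw [hTk]
    exact mul_le_mul_of_nonneg_left harc (by linarith)
  -- lower pointwise bound
  have hlower : ∀ k : ℕ,
      ((1 + q) / q) * (Real.arcsin (q ^ (k + 1)) - Real.arcsin (q ^ (k + 2))) ≤ T k := by
    intro k
    have harc := arcsin_le (q ^ (k + 2)) (q ^ (k + 1)) (pow_pos hq0 _).le
      (pow_le_pow_of_le_one hq0.le hq1.le (Nat.le_succ (k + 1))) (hpk1 k)
    have h2 : ((1 + q) / q) * ((q ^ (k + 1) - q ^ (k + 2)) / Real.sqrt (1 - (q ^ (k + 1)) ^ 2))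
        = T k := by
      rw [hT]; simp only; rw [hexp k]
      have hs := (hsqrtpos k).ne'
      field_simp
      ring
    calc ((1 + q) / q) * (Real.arcsin (q ^ (k + 1)) - Real.arcsin (q ^ (k + 2)))
        ≤ ((1 + q) / q) * ((q ^ (k + 1) - q ^ (k + 2)) / Real.sqrt (1 - (q ^ (k + 1)) ^ 2)) :=
          mul_le_mul_of_nonneg_left harc (by positivity)
      _ = T k := h2
  -- telescoping sums
  have htendsto : Tendsto (fun k : ℕ => Real.arcsin (q ^ k)) atTop (nhds 0) := by
    have h1 : Tendsto (fun k : ℕ => q ^ k) atTop (nhds 0) :=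
      tendsto_pow_atTop_nhds_zero_of_lt_one hq0.le hq1
    have h2 := (Real.continuous_arcsin.continuousAt (x := 0)).tendsto.comp h1
    simpa [Real.arcsin_zero, Function.comp_def] using h2
  have hmonof : ∀ n : ℕ, Real.arcsin (q ^ (n + 1)) ≤ Real.arcsin (q ^ n) :=
    fun n => Real.monotone_arcsin (hple n)
  have hUsum : HasSum (fun k => (1 + q) * (Real.arcsin (q ^ k) - Real.arcsin (q ^ (k + 1))))
      ((1 + q) * (Real.pi / 2)) := by
    have := (telescope_hasSum (fun k => Real.arcsin (q ^ k)) hmonof htendsto).mul_left (1 + q)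
    simpa [Real.arcsin_one] using this
  have hLsum : HasSum (fun k => ((1 + q) / q) *
      (Real.arcsin (q ^ (k + 1)) - Real.arcsin (q ^ (k + 2))))
      (((1 + q) / q) * Real.arcsin q) := by
    have hm : ∀ n : ℕ, Real.arcsin (q ^ (n + 1 + 1)) ≤ Real.arcsin (q ^ (n + 1)) :=
      fun n => hmonof (n + 1)
    have ht : Tendsto (fun k : ℕ => Real.arcsin (q ^ (k + 1))) atTop (nhds 0) :=
      htendsto.comp (tendsto_add_atTop_nat 1)
    have := (telescope_hasSum (fun k => Real.arcsin (q ^ (k + 1))) hm ht).mul_left ((1 + q) / q)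
    simpa [pow_one] using this
  have hTnonneg : ∀ k : ℕ, 0 ≤ T k := by
    intro k
    rw [hT]; simp only
    apply div_nonneg _ (Real.sqrt_nonneg _)
    apply mul_nonneg _ (pow_nonneg hq0.le _)
    nlinarith
  have hTsummable : Summable T := Summable.of_nonneg_of_le hTnonneg hupper hUsum.summable
  constructor
  · calc ((1 + q) / q) * Real.arcsin q = ∑' k : ℕ, ((1 + q) / q) *
        (Real.arcsin (q ^ (k + 1)) - Real.arcsin (q ^ (k + 2))) := hLsum.tsum_eq.symm
      _ ≤ ∑' k : ℕ, T k := hLsum.summable.tsum_le_tsum hlower hTsummable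
  · calc (∑' k : ℕ, T k) ≤ ∑' k : ℕ, (1 + q) *
        (Real.arcsin (q ^ k) - Real.arcsin (q ^ (k + 1))) :=
          hTsummable.tsum_le_tsum hupper hUsum.summable
      _ = (1 + q) * (Real.pi / 2) := hUsum.tsum_eq

/-- The total length of the quantised interval converges to `π` as the deformation parameter
tends to `1`:  `lim_{q→1⁻} ∑_{k=0}^∞ (1−q²)·q^k/√(1 − q^{2(k+1)}) = π`, i.e.
`lim_{q→1⁻} d_q(0,1) = π`. -/
theorem stmt_6 :
    Filter.Tendsto
      (fun q : ℝ => ∑' k : ℕ, (1 - q ^ 2) * q ^ k / Real.sqrt (1 - q ^ (2 * (k + 1))))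
      (nhdsWithin 1 (Set.Ioo 0 1)) (nhds Real.pi) := by
  have hg : Tendsto (fun q : ℝ => ((1 + q) / q) * Real.arcsin q)
      (nhdsWithin 1 (Set.Ioo 0 1)) (nhds Real.pi) := by
    have hc : ContinuousAt (fun q : ℝ => ((1 + q) / q) * Real.arcsin q) 1 := by
      apply ContinuousAt.mul
      · exact (continuousAt_const.add continuousAt_id).div continuousAt_id (by norm_num)
      · exact Real.continuous_arcsin.continuousAt
    have hval : ((1 : ℝ) + 1) / 1 * Real.arcsin 1 = Real.pi := by
      rw [Real.arcsin_one]; ring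
    have := hc.tendsto.mono_left (nhdsWithin_le_nhds (s := Set.Ioo (0:ℝ) 1))
    rwa [hval] at this
  have hh : Tendsto (fun q : ℝ => (1 + q) * (Real.pi / 2))
      (nhdsWithin 1 (Set.Ioo 0 1)) (nhds Real.pi) := by
    have hc : ContinuousAt (fun q : ℝ => (1 + q) * (Real.pi / 2)) 1 :=
      (continuousAt_const.add continuousAt_id).mul continuousAt_const
    have hval : ((1 : ℝ) + 1) * (Real.pi / 2) = Real.pi := by ring
    have := hc.tendsto.mono_left (nhdsWithin_le_nhds (s := Set.Ioo (0:ℝ) 1))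
    rwa [hval] at this
  refine tendsto_of_tendsto_of_tendsto_of_le_of_le' hg hh ?_ ?_
  · exact eventually_nhdsWithin_of_forall (fun q hq => (bounds_aux q hq).1)
  · exact eventually_nhdsWithin_of_forall (fun q hq => (bounds_aux q hq).2)
end

section
/- Let q ∈ (0,1) and let f : X_q → ℂ be continuous with f(0) = 0 and Lipschitz with respect to d_q. For n ∈ ℕ₀ define the truncation f_n : X_q → ℂ by f_n(q^{2k}) = f(q^{2k}) for k ≤ n and f_n(x) = 0 otherwise. Then the sequence of Lipschitz seminorms {L_{d_q}(f_n)}_{n=0}^∞ is bounded. -/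
/-- `X_q = {0} ∪ {q^{2k} : k ∈ ℕ₀} ⊆ ℝ`. -/
def Xq (q : ℝ) : Set ℝ := {0} ∪ {x : ℝ | ∃ n : ℕ, x = q ^ (2 * n)}

section aux
variable {q : ℝ}

noncomputable def tq (q : ℝ) (k : ℕ) : ℝ :=
  (1 - q ^ 2) * q ^ k / Real.sqrt (1 - q ^ (2 * (k + 1)))

lemma aux_q2 (hq0 : 0 < q) (hq1 : q < 1) : 0 < 1 - q ^ 2 := by nlinarith

lemma aux_arg_pos (hq0 : 0 < q) (hq1 : q < 1) (k : ℕ) : 0 < 1 - q ^ (2 * (k + 1)) := by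
  have : q ^ (2 * (k + 1)) < 1 := pow_lt_one₀ hq0.le hq1 (by omega)
  linarith

lemma tq_pos (hq0 : 0 < q) (hq1 : q < 1) (k : ℕ) : 0 < tq q k :=
  div_pos (mul_pos (aux_q2 hq0 hq1) (pow_pos hq0 k))
    (Real.sqrt_pos.mpr (aux_arg_pos hq0 hq1 k))

lemma tq_ge (hq0 : 0 < q) (hq1 : q < 1) (k : ℕ) : (1 - q ^ 2) * q ^ k ≤ tq q k := by
  have h1 : Real.sqrt (1 - q ^ (2 * (k + 1))) ≤ 1 := by
    apply Real.sqrt_le_one.mpr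
    have := pow_nonneg hq0.le (2 * (k + 1))
    linarith
  have hs : 0 < Real.sqrt (1 - q ^ (2 * (k + 1))) :=
    Real.sqrt_pos.mpr (aux_arg_pos hq0 hq1 k)
  rw [tq, le_div_iff₀ hs]
  have : 0 ≤ (1 - q ^ 2) * q ^ k :=
    mul_nonneg (aux_q2 hq0 hq1).le (pow_nonneg hq0.le k)
  nlinarith

lemma tq_le (hq0 : 0 < q) (hq1 : q < 1) (k : ℕ) :
    tq q k ≤ Real.sqrt (1 - q ^ 2) * q ^ k := by
  have hqk : q ^ (2 * (k + 1)) ≤ q ^ 2 := by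
    calc q ^ (2 * (k + 1)) = q ^ 2 * q ^ (2 * k) := by ring
    _ ≤ q ^ 2 * 1 := by
        have : q ^ (2 * k) ≤ 1 := pow_le_one₀ hq0.le hq1.le
        nlinarith
    _ = q ^ 2 := by ring
  have h1 : Real.sqrt (1 - q ^ 2) ≤ Real.sqrt (1 - q ^ (2 * (k + 1))) :=
    Real.sqrt_le_sqrt (by linarith)
  have h2 : 0 < Real.sqrt (1 - q ^ 2) := Real.sqrt_pos.mpr (aux_q2 hq0 hq1)
  calc tq q k ≤ (1 - q ^ 2) * q ^ k / Real.sqrt (1 - q ^ 2) :=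
        div_le_div_of_nonneg_left (mul_nonneg (aux_q2 hq0 hq1).le (pow_nonneg hq0.le k)) h2 h1
  _ = (1 - q ^ 2) / Real.sqrt (1 - q ^ 2) * q ^ k := by ring
  _ = Real.sqrt (1 - q ^ 2) * q ^ k := by rw [Real.div_sqrt]

lemma tq_bd (hq0 : 0 < q) (hq1 : q < 1) (n k : ℕ) :
    tq q (n + k) ≤ Real.sqrt (1 - q ^ 2) * q ^ n * q ^ k :=
  (tq_le hq0 hq1 (n + k)).trans_eq (by rw [pow_add]; ring)

lemma tq_summable (hq0 : 0 < q) (hq1 : q < 1) (n : ℕ) :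
    Summable (fun k => tq q (n + k)) :=
  Summable.of_nonneg_of_le (fun k => (tq_pos hq0 hq1 _).le) (tq_bd hq0 hq1 n)
    ((summable_geometric_of_lt_one hq0.le hq1).mul_left _)

lemma tq_tsum_le (hq0 : 0 < q) (hq1 : q < 1) (n : ℕ) :
    ∑' k : ℕ, tq q (n + k) ≤ Real.sqrt (1 - q ^ 2) * q ^ n / (1 - q) := by
  have h := Summable.tsum_le_tsum
    (f := fun k => tq q (n + k)) (g := fun k => Real.sqrt (1 - q ^ 2) * q ^ n * q ^ k)
    (tq_bd hq0 hq1 n)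
    (tq_summable hq0 hq1 n)
    ((summable_geometric_of_lt_one hq0.le hq1).mul_left _)
  rw [tsum_mul_left, tsum_geometric_of_lt_one hq0.le hq1] at h
  calc ∑' k : ℕ, tq q (n + k) ≤ Real.sqrt (1 - q ^ 2) * q ^ n * (1 - q)⁻¹ := h
  _ = Real.sqrt (1 - q ^ 2) * q ^ n / (1 - q) := by rw [div_eq_mul_inv]

lemma tq_tsum_pos (hq0 : 0 < q) (hq1 : q < 1) (n : ℕ) :
    0 < ∑' k : ℕ, tq q (n + k) :=
  Summable.tsum_pos (tq_summable hq0 hq1 n) (fun k => (tq_pos hq0 hq1 _).le) 0 (tq_pos hq0 hq1 _)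

lemma tq_sum_ge (hq0 : 0 < q) (hq1 : q < 1) {a b : ℕ} (hab : a < b) :
    (1 - q ^ 2) * q ^ a ≤ ∑ k ∈ Finset.Ico a b, tq q k := by
  calc (1 - q ^ 2) * q ^ a ≤ tq q a := tq_ge hq0 hq1 a
  _ ≤ ∑ k ∈ Finset.Ico a b, tq q k :=
      Finset.single_le_sum (fun k _ => (tq_pos hq0 hq1 k).le) (Finset.mem_Ico.mpr ⟨le_refl a, hab⟩)

lemma pow_inj (hq0 : 0 < q) (hq1 : q < 1) {n m : ℕ} (h : q ^ (2 * n) = q ^ (2 * m)) :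
    n = m := by
  by_contra hne
  rcases Nat.lt_or_ge n m with hlt | hge
  · have := pow_lt_pow_right_of_lt_one₀ hq0 hq1 (show 2 * n < 2 * m by omega)
    linarith
  · have hlt : m < n := by omega
    have := pow_lt_pow_right_of_lt_one₀ hq0 hq1 (show 2 * m < 2 * n by omega)
    linarith

end aux

/-- Let `q ∈ (0,1)` and let `f : X_q → ℂ` be continuous with `f(0) = 0` and Lipschitz with
respect to the metric `d_q` (specified by `hd_self`, `hd_pow`, `hd_zero`, `hd_zero'`).  For
`n ∈ ℕ₀` let `f_n` be the truncation of `f` given by `f_n(q^{2k}) = f(q^{2k})` for `k ≤ n` and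
`f_n = 0` elsewhere on `X_q`.  Then the sequence of Lipschitz seminorms `{L_{d_q}(f_n)}_n`
is bounded. -/
theorem stmt_10 (q : ℝ) (hq : q ∈ Set.Ioo (0 : ℝ) 1)
    (d : ℝ → ℝ → ℝ)
    (hd_self : ∀ x : ℝ, d x x = 0)
    (hd_pow : ∀ n m : ℕ, n ≠ m →
      d (q ^ (2 * n)) (q ^ (2 * m)) =
        ∑ k ∈ Finset.Ico (min m n) (max m n),
          (1 - q ^ 2) * q ^ k / Real.sqrt (1 - q ^ (2 * (k + 1))))
    (hd_zero : ∀ n : ℕ,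
      d (q ^ (2 * n)) 0 =
        ∑' k : ℕ, (1 - q ^ 2) * q ^ (n + k) / Real.sqrt (1 - q ^ (2 * (n + k + 1))))
    (hd_zero' : ∀ n : ℕ,
      d 0 (q ^ (2 * n)) =
        ∑' k : ℕ, (1 - q ^ 2) * q ^ (n + k) / Real.sqrt (1 - q ^ (2 * (n + k + 1))))
    (f : ℝ → ℂ)
    (hf0 : f 0 = 0)
    (hf_cont : ∀ x ∈ Xq q, ∀ ε > (0 : ℝ), ∃ δ > (0 : ℝ),
      ∀ y ∈ Xq q, d x y < δ → ‖f x - f y‖ < ε)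
    (hf_lip : ∃ C : ℝ, ∀ x ∈ Xq q, ∀ y ∈ Xq q, ‖f x - f y‖ ≤ C * d x y)
    (fn : ℕ → ℝ → ℂ)
    (hfn : ∀ n k : ℕ, k ≤ n → fn n (q ^ (2 * k)) = f (q ^ (2 * k)))
    (hfn0 : ∀ n : ℕ, ∀ x ∈ Xq q, (¬ ∃ k : ℕ, k ≤ n ∧ x = q ^ (2 * k)) → fn n x = 0) :
    ∃ B : ℝ, ∀ n : ℕ,
      (⨆ (x : ℝ) (_ : x ∈ Xq q) (y : ℝ) (_ : y ∈ Xq q) (_ : x ≠ y),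
        ENNReal.ofReal (‖fn n x - fn n y‖ / d x y)) ≤ ENNReal.ofReal B := by
  obtain ⟨hq0, hq1⟩ := hq
  obtain ⟨C0, hC0⟩ := hf_lip
  have hq2 : 0 < 1 - q ^ 2 := aux_q2 hq0 hq1
  have h1q : 0 < 1 - q := by linarith
  set C : ℝ := max C0 0 with hCdef
  set K : ℝ := Real.sqrt (1 - q ^ 2) / ((1 - q) * (1 - q ^ 2)) with hKdef
  set B : ℝ := C * max 1 K with hBdef
  have hC_nonneg : 0 ≤ C := le_max_right _ _
  have hK_nonneg : 0 ≤ K :=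
    div_nonneg (Real.sqrt_nonneg _) (mul_nonneg h1q.le hq2.le)
  have hCB : C ≤ B := by
    calc C = C * 1 := (mul_one C).symm
    _ ≤ C * max 1 K := mul_le_mul_of_nonneg_left (le_max_left 1 K) hC_nonneg
  have hC0B : C0 ≤ B := (le_max_left C0 0).trans hCB
  have hCKB : C * K ≤ B := mul_le_mul_of_nonneg_left (le_max_right 1 K) hC_nonneg
  have hB_nonneg : 0 ≤ B := hC_nonneg.trans hCB
  -- membership facts
  have hX0 : (0 : ℝ) ∈ Xq q := Or.inl rfl
  have hXpow : ∀ k : ℕ, q ^ (2 * k) ∈ Xq q := fun k => Or.inr ⟨k, rfl⟩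
  have hpow_ne : ∀ k : ℕ, q ^ (2 * k) ≠ 0 := fun k => (pow_pos hq0 _).ne'
  -- truncation values
  have hfn_at0 : ∀ n : ℕ, fn n 0 = 0 := fun n =>
    hfn0 n 0 hX0 (by rintro ⟨k, -, hk⟩; exact hpow_ne k hk.symm)
  have hfn_big : ∀ n k : ℕ, n < k → fn n (q ^ (2 * k)) = 0 := fun n k hk =>
    hfn0 n _ (hXpow k) (by
      rintro ⟨j, hj, hjk⟩
      have := pow_inj hq0 hq1 hjk.symm
      omega)
  -- distance facts
  have hd0sym : ∀ m : ℕ, d 0 (q ^ (2 * m)) = d (q ^ (2 * m)) 0 := fun m =>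
    (hd_zero' m).trans (hd_zero m).symm
  have hd0_pos : ∀ m : ℕ, 0 < d (q ^ (2 * m)) 0 := fun m => by
    rw [hd_zero m]; exact tq_tsum_pos hq0 hq1 m
  have hd0_le : ∀ m : ℕ, d (q ^ (2 * m)) 0 ≤ Real.sqrt (1 - q ^ 2) * q ^ m / (1 - q) :=
    fun m => by rw [hd_zero m]; exact tq_tsum_le hq0 hq1 m
  have hdp_ge : ∀ n m : ℕ, n ≠ m → (1 - q ^ 2) * q ^ (min m n) ≤ d (q ^ (2 * n)) (q ^ (2 * m)) := by
    intro n m hnm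
    rw [hd_pow n m hnm]
    exact tq_sum_ge hq0 hq1 (min_lt_max.mpr (by omega))
  have hdp_pos : ∀ n m : ℕ, n ≠ m → 0 < d (q ^ (2 * n)) (q ^ (2 * m)) := fun n m h =>
    lt_of_lt_of_le (mul_pos hq2 (pow_pos hq0 _)) (hdp_ge n m h)
  -- the key algebraic identity
  have hKid : ∀ j : ℕ, Real.sqrt (1 - q ^ 2) * q ^ j / (1 - q) = K * ((1 - q ^ 2) * q ^ j) := by
    intro j
    rw [hKdef]
    field_simp
  -- bridging bound: tail distance controlled by gap distance
  have hbridge : ∀ a b : ℕ, a ≠ b →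
      C * d (q ^ (2 * (min b a))) 0 ≤ B * d (q ^ (2 * a)) (q ^ (2 * b)) := by
    intro a b hab
    calc C * d (q ^ (2 * min b a)) 0
        ≤ C * (Real.sqrt (1 - q ^ 2) * q ^ (min b a) / (1 - q)) :=
          mul_le_mul_of_nonneg_left (hd0_le _) hC_nonneg
    _ = (C * K) * ((1 - q ^ 2) * q ^ (min b a)) := by rw [hKid]; ring
    _ ≤ (C * K) * d (q ^ (2 * a)) (q ^ (2 * b)) :=
          mul_le_mul_of_nonneg_left (hdp_ge a b hab) (mul_nonneg hC_nonneg hK_nonneg)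
    _ ≤ B * d (q ^ (2 * a)) (q ^ (2 * b)) :=
          mul_le_mul_of_nonneg_right hCKB (hdp_pos a b hab).le
  -- main pointwise bound
  have key : ∀ n : ℕ, ∀ x ∈ Xq q, ∀ y ∈ Xq q, x ≠ y →
      ‖fn n x - fn n y‖ ≤ B * d x y ∧ 0 < d x y := by
    intro n x hx y hy hxy
    rcases hx with hx | ⟨j, rfl⟩
    · rcases hy with hy | ⟨m, rfl⟩
      · exact absurd (hx.trans hy.symm) hxy
      · subst hx
        refine ⟨?_, by rw [hd0sym m]; exact hd0_pos m⟩
        rcases le_or_gt m n with hm | hm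
        · rw [hfn_at0 n, hfn n m hm, ← hf0]
          calc ‖f 0 - f (q ^ (2 * m))‖ ≤ C0 * d 0 (q ^ (2 * m)) :=
                hC0 0 hX0 _ (hXpow m)
          _ ≤ B * d 0 (q ^ (2 * m)) := by
                apply mul_le_mul_of_nonneg_right hC0B
                rw [hd0sym m]; exact (hd0_pos m).le
        · rw [hfn_at0 n, hfn_big n m hm, sub_self]
          rw [norm_zero]
          exact mul_nonneg hB_nonneg (by rw [hd0sym m]; exact (hd0_pos m).le)
    · rcases hy with hy | ⟨m, rfl⟩
      · subst hy
        refine ⟨?_, hd0_pos j⟩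
        rcases le_or_gt j n with hjn | hjn
        · rw [hfn n j hjn, hfn_at0 n, ← hf0]
          calc ‖f (q ^ (2 * j)) - f 0‖ ≤ C0 * d (q ^ (2 * j)) 0 :=
                hC0 _ (hXpow j) 0 hX0
          _ ≤ B * d (q ^ (2 * j)) 0 :=
                mul_le_mul_of_nonneg_right hC0B (hd0_pos j).le
        · rw [hfn_big n j hjn, hfn_at0 n, sub_self, norm_zero]
          exact mul_nonneg hB_nonneg (hd0_pos j).le
      · have hjm : j ≠ m := fun h => hxy (by rw [h])
        refine ⟨?_, hdp_pos j m hjm⟩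
        rcases le_or_gt j n with hjn | hjn <;> rcases le_or_gt m n with hmn | hmn
        · -- both small: use Lipschitz directly
          rw [hfn n j hjn, hfn n m hmn]
          calc ‖f (q ^ (2 * j)) - f (q ^ (2 * m))‖
              ≤ C0 * d (q ^ (2 * j)) (q ^ (2 * m)) := hC0 _ (hXpow j) _ (hXpow m)
          _ ≤ B * d (q ^ (2 * j)) (q ^ (2 * m)) :=
              mul_le_mul_of_nonneg_right hC0B (hdp_pos j m hjm).le
        · -- j ≤ n < m
          have hjm' : j < m := lt_of_le_of_lt hjn hmn
          rw [hfn n j hjn, hfn_big n m hmn, ← hf0]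
          have hminjm : min m j = j := min_eq_right hjm'.le
          calc ‖f (q ^ (2 * j)) - f 0‖ ≤ C0 * d (q ^ (2 * j)) 0 :=
                hC0 _ (hXpow j) 0 hX0
          _ ≤ C * d (q ^ (2 * j)) 0 :=
                mul_le_mul_of_nonneg_right (le_max_left C0 0) (hd0_pos j).le
          _ = C * d (q ^ (2 * min m j)) 0 := by rw [hminjm]
          _ ≤ B * d (q ^ (2 * j)) (q ^ (2 * m)) := hbridge j m hjm
        · -- m ≤ n < j
          have hmj' : m < j := lt_of_le_of_lt hmn hjn
          rw [hfn_big n j hjn, hfn n m hmn, ← hf0]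
          have hminjm : min m j = m := min_eq_left hmj'.le
          calc ‖f 0 - f (q ^ (2 * m))‖ ≤ C0 * d 0 (q ^ (2 * m)) :=
                hC0 0 hX0 _ (hXpow m)
          _ = C0 * d (q ^ (2 * m)) 0 := by rw [hd0sym m]
          _ ≤ C * d (q ^ (2 * m)) 0 :=
                mul_le_mul_of_nonneg_right (le_max_left C0 0) (hd0_pos m).le
          _ = C * d (q ^ (2 * min m j)) 0 := by rw [hminjm]
          _ ≤ B * d (q ^ (2 * j)) (q ^ (2 * m)) := hbridge j m hjm
        · -- both large: both truncated to zero
          rw [hfn_big n j hjn, hfn_big n m hmn, sub_self, norm_zero]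
          exact mul_nonneg hB_nonneg (hdp_pos j m hjm).le
  refine ⟨B, fun n => ?_⟩
  refine iSup_le fun x => iSup_le fun hx => iSup_le fun y => iSup_le fun hy =>
    iSup_le fun hxy => ?_
  obtain ⟨hb, hdpos⟩ := key n x hx y hy hxy
  exact ENNReal.ofReal_le_ofReal ((div_le_iff₀ hdpos).mpr hb)
end

section
/- Let q ∈ (0,1) and let f : X_q → ℂ be a function which vanishes at 0 and at all but finitely many points of X_q. Then for all m < n in ℕ₀ one has |f(q^{2m}) − f(q^{2n})| ≤ (max{ ρ_q(k) · |f(q^{2k}) − f(q^{2(k+1)})| : k ∈ ℕ₀ }) · d_q(q^{2m}, q^{2n}), and the Lipschitz seminorm of f with respect to d_q equals max{ ρ_q(k) · |f(q^{2k}) − f(q^{2(k+1)})| : k ∈ ℕ₀ }. -/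
/-- `ρ_q(x) = √(1 − q^{2(x+1)}) / ((1−q²)·q^x)`, with real exponents interpreted via `rpow`. -/
noncomputable def rho (q x : ℝ) : ℝ :=
  Real.sqrt (1 - q ^ (2 * (x + 1))) / ((1 - q ^ 2) * q ^ x)

/-- Let `q ∈ (0,1)` and let `f : X_q → ℂ` vanish at `0` and at all but finitely many points of
`X_q`.  Then for all `m < n` one has
`|f(q^{2m}) − f(q^{2n})| ≤ (max_k ρ_q(k)·|f(q^{2k}) − f(q^{2(k+1)})|)·d_q(q^{2m}, q^{2n})`,
and the Lipschitz seminorm of `f` with respect to `d_q` equals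
`max_k ρ_q(k)·|f(q^{2k}) − f(q^{2(k+1)})|` (the supremum being attained). -/
theorem stmt_11 (q : ℝ) (hq : q ∈ Set.Ioo (0 : ℝ) 1)
    (d : ℝ → ℝ → ℝ)
    (hd_self : ∀ x : ℝ, d x x = 0)
    (hd_pow : ∀ n m : ℕ, n ≠ m →
      d (q ^ (2 * n)) (q ^ (2 * m)) =
        ∑ k ∈ Finset.Ico (min m n) (max m n),
          (1 - q ^ 2) * q ^ k / Real.sqrt (1 - q ^ (2 * (k + 1))))
    (hd_zero : ∀ n : ℕ,
      d (q ^ (2 * n)) 0 =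
        ∑' k : ℕ, (1 - q ^ 2) * q ^ (n + k) / Real.sqrt (1 - q ^ (2 * (n + k + 1))))
    (hd_zero' : ∀ n : ℕ,
      d 0 (q ^ (2 * n)) =
        ∑' k : ℕ, (1 - q ^ 2) * q ^ (n + k) / Real.sqrt (1 - q ^ (2 * (n + k + 1))))
    (f : ℝ → ℂ)
    (hf0 : f 0 = 0)
    (hfin : {x : ℝ | x ∈ Xq q ∧ f x ≠ 0}.Finite) :
    (∀ m n : ℕ, m < n →
      ‖f (q ^ (2 * m)) - f (q ^ (2 * n))‖ ≤
        (⨆ k : ℕ, rho q k * ‖f (q ^ (2 * k)) - f (q ^ (2 * (k + 1)))‖) *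
          d (q ^ (2 * m)) (q ^ (2 * n))) ∧
    (⨆ (x : ℝ) (_ : x ∈ Xq q) (y : ℝ) (_ : y ∈ Xq q) (_ : x ≠ y),
        ENNReal.ofReal (‖f x - f y‖ / d x y)) =
      ENNReal.ofReal
        (⨆ k : ℕ, rho q k * ‖f (q ^ (2 * k)) - f (q ^ (2 * (k + 1)))‖) := by
  obtain ⟨hq0, hq1⟩ := hq
  set a : ℕ → ℝ := fun k => ‖f (q ^ (2 * k)) - f (q ^ (2 * (k + 1)))‖ with ha
  set s : ℕ → ℝ := fun k => (1 - q ^ 2) * q ^ k / Real.sqrt (1 - q ^ (2 * (k + 1))) with hs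
  have hq2 : q ^ 2 < 1 := pow_lt_one₀ hq0.le hq1 (by norm_num)
  have hsq_pos : ∀ k : ℕ, 0 < Real.sqrt (1 - q ^ (2 * (k + 1))) := by
    intro k
    have : q ^ (2 * (k + 1)) < 1 := pow_lt_one₀ hq0.le hq1 (by omega)
    exact Real.sqrt_pos.mpr (by linarith)
  have hs_pos : ∀ k : ℕ, 0 < s k := by
    intro k
    have h1 : 0 < (1 - q ^ 2) * q ^ k := mul_pos (by linarith) (pow_pos hq0 k)
    exact div_pos h1 (hsq_pos k)
  have rho_eq : ∀ k : ℕ, rho q k = Real.sqrt (1 - q ^ (2 * (k + 1))) / ((1 - q ^ 2) * q ^ k) := by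
    intro k
    unfold rho
    rw [show (2 * ((k : ℝ) + 1)) = ((2 * (k + 1) : ℕ) : ℝ) by push_cast; ring,
      Real.rpow_natCast, Real.rpow_natCast]
  have rho_mul_s : ∀ k : ℕ, rho q k * s k = 1 := by
    intro k
    rw [rho_eq k, hs]
    have h1 : (1 - q ^ 2) * q ^ k ≠ 0 := ne_of_gt (mul_pos (by linarith) (pow_pos hq0 k))
    field_simp
    exact div_self (mul_ne_zero (hsq_pos k).ne' (sub_pos.mpr hq2).ne')
  have rho_pos : ∀ k : ℕ, 0 < rho q k := by
    intro k
    rw [rho_eq k]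
    exact div_pos (hsq_pos k) (mul_pos (by linarith) (pow_pos hq0 k))
  -- finite support
  have hinj : Function.Injective fun k : ℕ => q ^ (2 * k) := by
    intro m n h
    by_contra hne
    rcases Nat.lt_or_ge m n with h' | h'
    · exact absurd h (ne_of_gt (pow_lt_pow_right_of_lt_one₀ hq0 hq1 (by omega)))
    · have : n < m := by omega
      exact absurd h (ne_of_lt (pow_lt_pow_right_of_lt_one₀ hq0 hq1 (by omega)))
  obtain ⟨N, hN⟩ : ∃ N : ℕ, ∀ k, N ≤ k → f (q ^ (2 * k)) = 0 := by
    have hSfin : {k : ℕ | f (q ^ (2 * k)) ≠ 0}.Finite := by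
      have hsub : {k : ℕ | f (q ^ (2 * k)) ≠ 0} ⊆
          (fun k : ℕ => q ^ (2 * k)) ⁻¹' {x : ℝ | x ∈ Xq q ∧ f x ≠ 0} :=
        fun k hk => ⟨Or.inr ⟨k, rfl⟩, hk⟩
      exact ((hfin.preimage (hinj.injOn))).subset hsub
    obtain ⟨B, hB⟩ := hSfin.bddAbove
    refine ⟨B + 1, fun k hk => ?_⟩
    by_contra h
    have := hB (Set.mem_setOf.mpr h)
    omega
  have a_zero : ∀ k, N ≤ k → a k = 0 := by
    intro k hk
    simp [ha, hN k hk, hN (k + 1) (by omega)]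
  have a_nonneg : ∀ k, 0 ≤ a k := fun k => norm_nonneg _
  -- the supremum
  set M : ℝ := ⨆ k : ℕ, rho q k * a k with hM
  have hbdd : BddAbove (Set.range fun k : ℕ => rho q k * a k) := by
    have hfin' : (insert (0:ℝ) ((fun k : ℕ => rho q k * a k) '' Set.Iio N)).Finite :=
      ((Set.finite_Iio N).image _).insert 0
    refine hfin'.bddAbove.mono ?_
    rintro x ⟨k, rfl⟩
    rcases Nat.lt_or_ge k N with h | h
    · exact Set.mem_insert_iff.mpr (Or.inr ⟨k, h, rfl⟩)
    · simp [a_zero k h]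
  have hle_M : ∀ k : ℕ, rho q k * a k ≤ M := fun k => le_ciSup hbdd k
  have hM0 : 0 ≤ M := le_trans (mul_nonneg (rho_pos 0).le (a_nonneg 0)) (hle_M 0)
  -- core estimate
  have core : ∀ m n : ℕ, m < n →
      ‖f (q ^ (2 * m)) - f (q ^ (2 * n))‖ ≤ M * ∑ k ∈ Finset.Ico m n, s k := by
    intro m n hmn
    have tel : f (q ^ (2 * m)) - f (q ^ (2 * n)) =
        ∑ k ∈ Finset.Ico m n, (f (q ^ (2 * k)) - f (q ^ (2 * (k + 1)))) := by
      rw [Finset.sum_Ico_eq_sub _ hmn.le,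
        Finset.sum_range_sub' (fun k => f (q ^ (2 * k))) n,
        Finset.sum_range_sub' (fun k => f (q ^ (2 * k))) m]
      ring
    calc ‖f (q ^ (2 * m)) - f (q ^ (2 * n))‖
        = ‖∑ k ∈ Finset.Ico m n, (f (q ^ (2 * k)) - f (q ^ (2 * (k + 1))))‖ := by
          rw [tel]
      _ ≤ ∑ k ∈ Finset.Ico m n, a k := norm_sum_le _ _
      _ ≤ ∑ k ∈ Finset.Ico m n, M * s k := by
          refine Finset.sum_le_sum fun k _ => ?_
          have h1 : a k = (rho q k * a k) * s k := by
            rw [mul_comm (rho q k) (a k), mul_assoc, rho_mul_s k, mul_one]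
          rw [h1]
          exact mul_le_mul_of_nonneg_right (hle_M k) (hs_pos k).le
      _ = M * ∑ k ∈ Finset.Ico m n, s k := (Finset.mul_sum _ _ _).symm
  -- summability
  have hsum : Summable s := by
    refine Summable.of_nonneg_of_le (fun k => (hs_pos k).le)
      (fun k => ?_) (((summable_geometric_of_lt_one hq0.le hq1)).mul_left
        ((1 - q ^ 2) / Real.sqrt (1 - q ^ 2)))
    have hle : Real.sqrt (1 - q ^ 2) ≤ Real.sqrt (1 - q ^ (2 * (k + 1))) := by
      apply Real.sqrt_le_sqrt
      have : q ^ (2 * (k + 1)) ≤ q ^ 2 :=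
        pow_le_pow_of_le_one hq0.le hq1.le (by omega)
      linarith
    have hpos : 0 < Real.sqrt (1 - q ^ 2) := Real.sqrt_pos.mpr (by linarith)
    rw [hs]
    simp only []
    rw [div_le_iff₀ (hsq_pos k)]
    calc (1 - q ^ 2) * q ^ k
        = ((1 - q ^ 2) / Real.sqrt (1 - q ^ 2) * q ^ k) * Real.sqrt (1 - q ^ 2) := by
          field_simp
      _ ≤ ((1 - q ^ 2) / Real.sqrt (1 - q ^ 2) * q ^ k) * Real.sqrt (1 - q ^ (2 * (k + 1))) := by
          refine mul_le_mul_of_nonneg_left hle (mul_nonneg (div_nonneg (by linarith) hpos.le) (pow_pos hq0 k).le)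
  have hsum_n : ∀ n : ℕ, Summable fun k => s (n + k) := by
    intro n
    have := (summable_nat_add_iff (f := s) n).mpr hsum
    simpa [add_comm] using this
  have ht_pos : ∀ n : ℕ, 0 < ∑' k : ℕ, s (n + k) := by
    intro n
    have h1 : s (n + 0) ≤ ∑' k : ℕ, s (n + k) :=
      Summable.le_tsum (hsum_n n) 0 fun i _ => (hs_pos _).le
    have := hs_pos (n + 0)
    linarith
  have zero_est : ∀ n : ℕ, ‖f (q ^ (2 * n))‖ ≤ M * ∑' k : ℕ, s (n + k) := by
    intro n
    have hNn : n < max (n + 1) N := lt_of_lt_of_le (Nat.lt_succ_self n) (le_max_left _ _)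
    have h1 := core n (max (n + 1) N) hNn
    rw [hN _ (le_max_right _ _), sub_zero] at h1
    refine h1.trans (mul_le_mul_of_nonneg_left ?_ hM0)
    rw [Finset.sum_Ico_eq_sum_range]
    exact Summable.sum_le_tsum (Finset.range _) (fun i _ => (hs_pos _).le) (hsum_n n)
  -- general pair estimate
  have key : ∀ m n : ℕ, m ≠ n →
      ‖f (q ^ (2 * m)) - f (q ^ (2 * n))‖ ≤
        M * ∑ k ∈ Finset.Ico (min n m) (max n m), s k := by
    intro m n hmn
    rcases Nat.lt_or_ge m n with h | h
    · rw [min_eq_right h.le, max_eq_left h.le]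
      exact core m n h
    · have h' : n < m := by omega
      rw [min_eq_left h'.le, max_eq_right h'.le, norm_sub_rev]
      exact core n m h'
  constructor
  · intro m n hmn
    rw [hd_pow m n hmn.ne]
    exact key m n hmn.ne
  · -- the supremum equality
    have attain : ∃ k₀ : ℕ, M = rho q k₀ * a k₀ := by
      have hne : (Finset.range (N + 1)).Nonempty :=
        Finset.nonempty_range_iff.mpr (Nat.succ_ne_zero N)
      obtain ⟨k₀, hk₀mem, hk₀⟩ := Finset.exists_mem_eq_sup' hne
        (fun k : ℕ => rho q k * a k)
      have hub : ∀ k : ℕ, rho q k * a k ≤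
          (Finset.range (N + 1)).sup' hne (fun k : ℕ => rho q k * a k) := by
        intro k
        rcases Nat.lt_or_ge k (N + 1) with h | h
        · exact Finset.le_sup' (fun k : ℕ => rho q k * a k) (Finset.mem_range.mpr h)
        · rw [a_zero k (by omega), mul_zero]
          have h2 : rho q (N : ℕ) * a N ≤
              (Finset.range (N + 1)).sup' hne (fun k : ℕ => rho q k * a k) :=
            Finset.le_sup' (fun k : ℕ => rho q k * a k)
              (Finset.mem_range.mpr (Nat.lt_succ_self N))
          rw [a_zero N le_rfl, mul_zero] at h2
          exact h2
      exact ⟨k₀, le_antisymm ((ciSup_le hub).trans (le_of_eq hk₀)) (hle_M k₀)⟩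
    apply le_antisymm
    · refine iSup_le fun x => iSup_le fun hx => iSup_le fun y => iSup_le fun hy =>
        iSup_le fun hxy => ENNReal.ofReal_le_ofReal ?_
      rcases hx with hx0 | ⟨m, rfl⟩
      · have hx0 : x = 0 := hx0
        subst hx0
        rcases hy with hy0 | ⟨n, rfl⟩
        · exact absurd hy0.symm hxy
        · rw [hd_zero' n, hf0, zero_sub, norm_neg,
            div_le_iff₀ (ht_pos n)]
          exact zero_est n
      · rcases hy with hy0 | ⟨n, rfl⟩
        · have hy0 : y = 0 := hy0
          subst hy0
          rw [hd_zero m, hf0, sub_zero, div_le_iff₀ (ht_pos m)]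
          exact zero_est m
        · have hmn : m ≠ n := fun h => hxy (by rw [h])
          rw [hd_pow m n hmn]
          have hpos : 0 < ∑ k ∈ Finset.Ico (min n m) (max n m), s k := by
            refine Finset.sum_pos (fun i _ => hs_pos i) ?_
            refine Finset.nonempty_Ico.mpr ?_
            rcases Nat.lt_or_ge m n with h | h
            · rw [min_eq_right h.le, max_eq_left h.le]; exact h
            · have : n < m := by omega
              rw [min_eq_left this.le, max_eq_right this.le]; exact this
          rw [div_le_iff₀ hpos]
          exact key m n hmn
    · obtain ⟨k₀, hk₀⟩ := attain
      have hxy : q ^ (2 * k₀) ≠ q ^ (2 * (k₀ + 1)) :=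
        ne_of_gt (pow_lt_pow_right_of_lt_one₀ hq0 hq1 (by omega))
      have hd : d (q ^ (2 * k₀)) (q ^ (2 * (k₀ + 1))) = s k₀ := by
        rw [hd_pow k₀ (k₀ + 1) (by omega), min_eq_right (Nat.le_succ k₀),
          max_eq_left (Nat.le_succ k₀), Nat.Ico_succ_singleton, Finset.sum_singleton]
      have hratio : a k₀ / d (q ^ (2 * k₀)) (q ^ (2 * (k₀ + 1))) = rho q k₀ * a k₀ := by
        rw [hd, div_eq_iff (hs_pos k₀).ne', mul_comm (rho q k₀) (a k₀), mul_assoc,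
          rho_mul_s k₀, mul_one]
      rw [hk₀, ← hratio]
      refine le_iSup_of_le (q ^ (2 * k₀)) (le_iSup_of_le (Or.inr ⟨k₀, rfl⟩)
        (le_iSup_of_le (q ^ (2 * (k₀ + 1))) (le_iSup_of_le (Or.inr ⟨k₀ + 1, rfl⟩)
        (le_iSup_of_le hxy (le_refl _)))))
end

section
/- For every q ∈ (0,1), the map ι_q : X_q → ℝ given by ι_q(x) = d_q(1, x) − π/2 is an isometric embedding of the metric space (X_q, d_q) into ℝ with its standard metric; that is, |ι_q(x) − ι_q(y)| = d_q(x,y) for all x, y ∈ X_q. -/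
/-- For every `q ∈ (0,1)`, the map `ι_q : X_q → ℝ`, `ι_q(x) = d_q(1,x) − π/2`, is an isometric
embedding of `(X_q, d_q)` into `ℝ` with its standard metric:
`|ι_q(x) − ι_q(y)| = d_q(x,y)` for all `x, y ∈ X_q`.  Here `d_q` is specified by the
hypotheses `hd_self`, `hd_pow`, `hd_zero`, `hd_zero'`, and `1 = q^0 ∈ X_q`. -/
theorem stmt_12 (q : ℝ) (hq : q ∈ Set.Ioo (0 : ℝ) 1)
    (d : ℝ → ℝ → ℝ)
    (hd_self : ∀ x : ℝ, d x x = 0)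
    (hd_pow : ∀ n m : ℕ, n ≠ m →
      d (q ^ (2 * n)) (q ^ (2 * m)) =
        ∑ k ∈ Finset.Ico (min m n) (max m n),
          (1 - q ^ 2) * q ^ k / Real.sqrt (1 - q ^ (2 * (k + 1))))
    (hd_zero : ∀ n : ℕ,
      d (q ^ (2 * n)) 0 =
        ∑' k : ℕ, (1 - q ^ 2) * q ^ (n + k) / Real.sqrt (1 - q ^ (2 * (n + k + 1))))
    (hd_zero' : ∀ n : ℕ,
      d 0 (q ^ (2 * n)) =
        ∑' k : ℕ, (1 - q ^ 2) * q ^ (n + k) / Real.sqrt (1 - q ^ (2 * (n + k + 1))))  :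
    ∀ x ∈ Xq q, ∀ y ∈ Xq q,
      |(d 1 x - Real.pi / 2) - (d 1 y - Real.pi / 2)| = d x y := by
  obtain ⟨hq0, hq1⟩ := hq
  set f : ℕ → ℝ := fun k => (1 - q ^ 2) * q ^ k / Real.sqrt (1 - q ^ (2 * (k + 1))) with hf
  have hq2 : q ^ 2 < 1 := by nlinarith
  have hq2' : (0:ℝ) < 1 - q ^ 2 := by linarith
  have hfnonneg : ∀ k, 0 ≤ f k := by
    intro k
    apply div_nonneg
    · positivity
    · exact Real.sqrt_nonneg _
  have hsummable : Summable f := by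
    have hg : Summable (fun k : ℕ => (1 - q ^ 2) / Real.sqrt (1 - q ^ 2) * q ^ k) :=
      (summable_geometric_of_lt_one hq0.le hq1).mul_left _
    refine Summable.of_nonneg_of_le hfnonneg (fun k => ?_) hg
    have h1 : Real.sqrt (1 - q ^ 2) ≤ Real.sqrt (1 - q ^ (2 * (k + 1))) := by
      apply Real.sqrt_le_sqrt
      have : q ^ (2 * (k + 1)) ≤ q ^ 2 := by
        apply pow_le_pow_of_le_one hq0.le hq1.le; omega
      linarith
    have h2 : (0:ℝ) < Real.sqrt (1 - q ^ 2) := Real.sqrt_pos.mpr hq2'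
    have h3 : (0:ℝ) < Real.sqrt (1 - q ^ (2 * (k + 1))) := lt_of_lt_of_le h2 h1
    show (1 - q ^ 2) * q ^ k / Real.sqrt (1 - q ^ (2 * (k + 1))) ≤ _
    rw [div_le_iff₀ h3, div_mul_eq_mul_div, div_mul_eq_mul_div, le_div_iff₀ h2]
    have hk : (0:ℝ) ≤ (1 - q ^ 2) * q ^ k := by positivity
    nlinarith [mul_le_mul_of_nonneg_left h1 hk]
  have hS : ∀ n : ℕ, d 1 (q ^ (2 * n)) = ∑ k ∈ Finset.range n, f k := by
    intro n
    rcases Nat.eq_zero_or_pos n with h0 | hpos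
    · subst h0
      rw [show q ^ (2 * 0) = (1:ℝ) by norm_num]
      simp [hd_self]
    · have h := hd_pow 0 n (by omega)
      rw [show q ^ (2 * 0) = (1:ℝ) by norm_num] at h
      rw [h]
      rw [min_eq_right (Nat.zero_le n), max_eq_left (Nat.zero_le n), ← Finset.range_eq_Ico]
  have hT : d 1 0 = ∑' k, f k := by
    have h := hd_zero 0
    rw [show q ^ (2 * 0) = (1:ℝ) by norm_num] at h
    rw [h]
    simp [hf]
  have key : ∀ n m : ℕ, |(∑ k ∈ Finset.range n, f k) - ∑ k ∈ Finset.range m, f k|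
      = ∑ k ∈ Finset.Ico (min m n) (max m n), f k := by
    intro n m
    rcases le_total n m with h | h
    · rw [min_eq_right h, max_eq_left h, Finset.sum_Ico_eq_sub _ h, abs_sub_comm,
        abs_of_nonneg]
      rw [sub_nonneg]
      exact Finset.sum_le_sum_of_subset_of_nonneg
        (Finset.range_subset_range.mpr h) (fun i _ _ => hfnonneg i)
    · rw [min_eq_left h, max_eq_right h, Finset.sum_Ico_eq_sub _ h, abs_of_nonneg]
      rw [sub_nonneg]
      exact Finset.sum_le_sum_of_subset_of_nonneg
        (Finset.range_subset_range.mpr h) (fun i _ _ => hfnonneg i)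
  -- tail sums
  have htail : ∀ n : ℕ, |(∑' k, f k) - ∑ k ∈ Finset.range n, f k| = ∑' k, f (n + k) := by
    intro n
    have h := Summable.sum_add_tsum_nat_add n hsummable
    have h2 : (∑' k, f (n + k)) = (∑' k, f k) - ∑ k ∈ Finset.range n, f k := by
      have : (∑' k, f (k + n)) = (∑' k, f (n + k)) := by
        apply tsum_congr; intro k; rw [add_comm]
      linarith [h, this]
    rw [h2, abs_of_nonneg]
    rw [sub_nonneg]
    exact Summable.sum_le_tsum _ (fun i _ => hfnonneg i) hsummable
  have hinj : ∀ n m : ℕ, q ^ (2 * n) = q ^ (2 * m) → n = m := by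
    intro n m h
    by_contra hne
    rcases Nat.lt_or_ge n m with hlt | hge
    · have := pow_lt_pow_right_of_lt_one₀ hq0 hq1 (show 2 * n < 2 * m by omega)
      linarith
    · have hlt : m < n := by omega
      have := pow_lt_pow_right_of_lt_one₀ hq0 hq1 (show 2 * m < 2 * n by omega)
      linarith
  intro x hx y hy
  have hsimp : (d 1 x - Real.pi / 2) - (d 1 y - Real.pi / 2) = d 1 x - d 1 y := by ring
  rw [hsimp]
  rcases hx with hx0 | ⟨n, rfl⟩
  · rcases hy with hy0 | ⟨m, rfl⟩
    · simp only [Set.mem_singleton_iff] at hx0 hy0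
      subst hx0; subst hy0
      simp [hd_self]
    · simp only [Set.mem_singleton_iff] at hx0
      subst hx0
      rw [hd_zero' m, hT, hS m, htail m]
  · rcases hy with hy0 | ⟨m, rfl⟩
    · simp only [Set.mem_singleton_iff] at hy0
      subst hy0
      rw [hd_zero n, hT, hS n, abs_sub_comm, htail n]
    · by_cases hnm : n = m
      · subst hnm
        simp [hd_self]
      · rw [hd_pow n m hnm, hS n, hS m, key n m]
end

section
/- The map q ↦ (X_q, d_q) from (0,1) to the space of (isometry classes of) nonempty compact metric spaces is continuous with respect to the Gromov–Hausdorff distance: for every q₀ ∈ (0,1) and ε > 0 there is δ > 0 such that for all q ∈ (0,1) with |q − q₀| < δ, the Gromov–Hausdorff distance between (X_q, d_q) and (X_{q₀}, d_{q₀}) is less than ε. -/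
open Set Finset


noncomputable def aq (q : ℝ) (k : ℕ) : ℝ :=
  (1 - q ^ 2) * q ^ k / Real.sqrt (1 - q ^ (2 * (k + 1)))

lemma hq2 {q : ℝ} (hq : q ∈ Set.Ioo (0:ℝ) 1) (k : ℕ) : q ^ (2 * (k+1)) ≤ q ^ 2 :=
  pow_le_pow_of_le_one hq.1.le hq.2.le (by omega)

lemma sqrt_pos' {q : ℝ} (hq : q ∈ Set.Ioo (0:ℝ) 1) (k : ℕ) :
    Real.sqrt (1 - q ^ 2) ≤ Real.sqrt (1 - q ^ (2 * (k + 1))) ∧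
      0 < Real.sqrt (1 - q ^ (2 * (k + 1))) := by
  have h1 : q ^ 2 < 1 := pow_lt_one₀ hq.1.le hq.2 (by norm_num)
  constructor
  · exact Real.sqrt_le_sqrt (by linarith [hq2 hq k])
  · exact Real.sqrt_pos.2 (by linarith [hq2 hq k])

lemma aq_nonneg {q : ℝ} (hq : q ∈ Set.Ioo (0:ℝ) 1) (k : ℕ) : 0 ≤ aq q k := by
  have h1 : q ^ 2 < 1 := pow_lt_one₀ hq.1.le hq.2 (by norm_num)
  have := (sqrt_pos' hq k).2
  exact div_nonneg (mul_nonneg (by linarith) (pow_nonneg hq.1.le k)) this.le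

lemma aq_le {q : ℝ} (hq : q ∈ Set.Ioo (0:ℝ) 1) (k : ℕ) : aq q k ≤ q ^ k := by
  have h1 : q ^ 2 < 1 := pow_lt_one₀ hq.1.le hq.2 (by norm_num)
  have hs := sqrt_pos' hq k
  have hsq : 0 < Real.sqrt (1 - q ^ 2) := Real.sqrt_pos.2 (by linarith)
  have : aq q k ≤ (1 - q ^ 2) * q ^ k / Real.sqrt (1 - q ^ 2) := by
    apply div_le_div_of_nonneg_left _ hsq hs.1
    exact mul_nonneg (by linarith) (pow_nonneg hq.1.le k)
  calc aq q k ≤ (1 - q ^ 2) * q ^ k / Real.sqrt (1 - q ^ 2) := this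
    _ = q ^ k * ((1 - q ^ 2) / Real.sqrt (1 - q ^ 2)) := by ring
    _ = q ^ k * Real.sqrt (1 - q ^ 2) := by rw [Real.div_sqrt]
    _ ≤ q ^ k * 1 := by
        gcongr
        · exact pow_nonneg hq.1.le k
        · exact Real.sqrt_le_one.mpr (by nlinarith [pow_nonneg hq.1.le 2])
    _ = q ^ k := mul_one _

lemma aq_summable {q : ℝ} (hq : q ∈ Set.Ioo (0:ℝ) 1) : Summable (aq q) :=
  Summable.of_nonneg_of_le (aq_nonneg hq) (aq_le hq)
    (summable_geometric_of_lt_one hq.1.le hq.2)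

lemma aq_tail_le {q : ℝ} (hq : q ∈ Set.Ioo (0:ℝ) 1) (N : ℕ) :
    (∑' k : ℕ, aq q (N + k)) ≤ q ^ N / (1 - q) := by
  have hsum : Summable fun k => aq q (N + k) := by
    simpa [add_comm] using ((summable_nat_add_iff N).2 (aq_summable hq))
  have hg : Summable fun k : ℕ => q ^ (N + k) := by
    simpa [add_comm] using ((summable_nat_add_iff N).2
      (summable_geometric_of_lt_one hq.1.le hq.2))
  calc (∑' k : ℕ, aq q (N + k)) ≤ ∑' k : ℕ, q ^ (N + k) :=
        Summable.tsum_le_tsum (fun k => aq_le hq (N + k)) hsum hg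
    _ = q ^ N * ∑' k : ℕ, q ^ k := by
        rw [← tsum_mul_left]; congr 1; ext k; rw [pow_add]
    _ = q ^ N / (1 - q) := by
        rw [tsum_geometric_of_lt_one hq.1.le hq.2, div_eq_mul_inv]

noncomputable def Dq (q q' : ℝ) (N : ℕ) : ℝ :=
  (∑ k ∈ Finset.range N, |aq q k - aq q' k|) + q ^ N / (1 - q) + q' ^ N / (1 - q')

lemma aq_sum_le_tail {q : ℝ} (hq : q ∈ Set.Ioo (0:ℝ) 1) (N M : ℕ) :
    ∑ k ∈ Finset.Ico N M, aq q k ≤ q ^ N / (1 - q) := by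
  have hsum : Summable fun k => aq q (N + k) := by
    simpa [add_comm] using ((summable_nat_add_iff N).2 (aq_summable hq))
  rw [Finset.sum_Ico_eq_sum_range]
  calc ∑ i ∈ Finset.range (M - N), aq q (N + i)
      ≤ ∑' k : ℕ, aq q (N + k) :=
        Summable.sum_le_tsum _ (fun k _ => aq_nonneg hq _) hsum
    _ ≤ q ^ N / (1 - q) := aq_tail_le hq N

lemma tail_mono {q : ℝ} (hq : q ∈ Set.Ioo (0:ℝ) 1) {N n : ℕ} (hNn : N ≤ n) :
    q ^ n / (1 - q) ≤ q ^ N / (1 - q) := by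
  have h1q : (0:ℝ) < 1 - q := by linarith [hq.2]
  exact div_le_div_of_nonneg_right (pow_le_pow_of_le_one hq.1.le hq.2.le hNn) h1q.le

lemma diff_Ico_le {q q' : ℝ} (hq : q ∈ Set.Ioo (0:ℝ) 1) (hq' : q' ∈ Set.Ioo (0:ℝ) 1)
    (N a b : ℕ) :
    |∑ k ∈ Finset.Ico a b, aq q k - ∑ k ∈ Finset.Ico a b, aq q' k| ≤ Dq q q' N := by
  have h1 : |∑ k ∈ Finset.Ico a b, aq q k - ∑ k ∈ Finset.Ico a b, aq q' k|
      ≤ ∑ k ∈ Finset.Ico a b, |aq q k - aq q' k| := by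
    rw [← Finset.sum_sub_distrib]
    exact Finset.abs_sum_le_sum_abs _ _
  have h2 : ∑ k ∈ Finset.Ico a b, |aq q k - aq q' k|
      ≤ ∑ k ∈ Finset.range (max b N), |aq q k - aq q' k| := by
    apply Finset.sum_le_sum_of_subset_of_nonneg
    · intro k hk
      simp only [Finset.mem_Ico] at hk
      exact Finset.mem_range.2 (lt_of_lt_of_le hk.2 (le_max_left _ _))
    · intro k _ _; exact abs_nonneg _
  have h3 : ∑ k ∈ Finset.range (max b N), |aq q k - aq q' k|
      = ∑ k ∈ Finset.range N, |aq q k - aq q' k|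
        + ∑ k ∈ Finset.Ico N (max b N), |aq q k - aq q' k| := by
    rw [Finset.range_eq_Ico, Finset.range_eq_Ico]
    exact (Finset.sum_Ico_consecutive (fun k => |aq q k - aq q' k|) (Nat.zero_le N) (le_max_right b N)).symm
  have h4 : ∑ k ∈ Finset.Ico N (max b N), |aq q k - aq q' k|
      ≤ q ^ N / (1 - q) + q' ^ N / (1 - q') := by
    calc ∑ k ∈ Finset.Ico N (max b N), |aq q k - aq q' k|
        ≤ ∑ k ∈ Finset.Ico N (max b N), (aq q k + aq q' k) := by
          apply Finset.sum_le_sum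
          intro k _
          have := aq_nonneg hq k; have := aq_nonneg hq' k
          rw [abs_sub_le_iff]; constructor <;> linarith
      _ = ∑ k ∈ Finset.Ico N (max b N), aq q k
          + ∑ k ∈ Finset.Ico N (max b N), aq q' k := Finset.sum_add_distrib
      _ ≤ q ^ N / (1 - q) + q' ^ N / (1 - q') :=
          add_le_add (aq_sum_le_tail hq N _) (aq_sum_le_tail hq' N _)
  unfold Dq
  linarith

lemma diff_tail_le {q q' : ℝ} (hq : q ∈ Set.Ioo (0:ℝ) 1) (hq' : q' ∈ Set.Ioo (0:ℝ) 1)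
    (N n : ℕ) :
    |(∑' k : ℕ, aq q (n + k)) - ∑' k : ℕ, aq q' (n + k)| ≤ Dq q q' N := by
  have hfin : 0 ≤ ∑ k ∈ Finset.range N, |aq q k - aq q' k| :=
    Finset.sum_nonneg fun k _ => abs_nonneg _
  rcases le_or_gt N n with hNn | hnN
  · have hA0 : 0 ≤ ∑' k : ℕ, aq q (n + k) := tsum_nonneg fun k => aq_nonneg hq _
    have hB0 : 0 ≤ ∑' k : ℕ, aq q' (n + k) := tsum_nonneg fun k => aq_nonneg hq' _
    have hA : (∑' k : ℕ, aq q (n + k)) ≤ q ^ N / (1 - q) :=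
      le_trans (aq_tail_le hq n) (tail_mono hq hNn)
    have hB : (∑' k : ℕ, aq q' (n + k)) ≤ q' ^ N / (1 - q') :=
      le_trans (aq_tail_le hq' n) (tail_mono hq' hNn)
    unfold Dq
    rw [abs_sub_le_iff]
    constructor <;> linarith
  · have hnN' : n ≤ N := hnN.le
    have key : ∀ (r : ℝ), r ∈ Set.Ioo (0:ℝ) 1 →
        (∑' k : ℕ, aq r (n + k))
          = ∑ k ∈ Finset.Ico n N, aq r k + ∑' k : ℕ, aq r (N + k) := by
      intro r hr
      have hsr : Summable fun k => aq r (n + k) := by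
        simpa [add_comm] using ((summable_nat_add_iff n).2 (aq_summable hr))
      have hkey := Summable.sum_add_tsum_nat_add (N - n) hsr
      rw [← hkey, Finset.sum_Ico_eq_sum_range]
      congr 1
      apply tsum_congr
      intro i
      congr 1
      omega
    rw [key q hq, key q' hq']
    have h1 : |∑ k ∈ Finset.Ico n N, aq q k - ∑ k ∈ Finset.Ico n N, aq q' k|
        ≤ ∑ k ∈ Finset.range N, |aq q k - aq q' k| := by
      have ha : |∑ k ∈ Finset.Ico n N, aq q k - ∑ k ∈ Finset.Ico n N, aq q' k|
          ≤ ∑ k ∈ Finset.Ico n N, |aq q k - aq q' k| := by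
        rw [← Finset.sum_sub_distrib]
        exact Finset.abs_sum_le_sum_abs _ _
      have hb : (∑ k ∈ Finset.Ico n N, |aq q k - aq q' k|)
          ≤ ∑ k ∈ Finset.range N, |aq q k - aq q' k| := by
        apply Finset.sum_le_sum_of_subset_of_nonneg
        · rw [Finset.range_eq_Ico]
          exact Finset.Ico_subset_Ico (Nat.zero_le n) le_rfl
        · intro k _ _; exact abs_nonneg _
      exact ha.trans hb
    have hT1 : (0:ℝ) ≤ ∑' k : ℕ, aq q (N + k) := tsum_nonneg fun k => aq_nonneg hq _
    have hT2 : (0:ℝ) ≤ ∑' k : ℕ, aq q' (N + k) := tsum_nonneg fun k => aq_nonneg hq' _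
    have hT1' := aq_tail_le hq N
    have hT2' := aq_tail_le hq' N
    unfold Dq
    rw [abs_sub_le_iff] at h1 ⊢
    constructor <;> linarith [h1.1, h1.2]

lemma Dq_nonneg {q q' : ℝ} (hq : q ∈ Set.Ioo (0:ℝ) 1) (hq' : q' ∈ Set.Ioo (0:ℝ) 1) (N : ℕ) :
    0 ≤ Dq q q' N := by
  have h1 : (0:ℝ) ≤ q ^ N / (1 - q) :=
    div_nonneg (pow_nonneg hq.1.le N) (by linarith [hq.2])
  have h2 : (0:ℝ) ≤ q' ^ N / (1 - q') :=
    div_nonneg (pow_nonneg hq'.1.le N) (by linarith [hq'.2])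
  have h3 : 0 ≤ ∑ k ∈ Finset.range N, |aq q k - aq q' k| :=
    Finset.sum_nonneg fun k _ => abs_nonneg _
  unfold Dq; linarith

lemma aq_continuousAt {q₀ : ℝ} (h : q₀ ∈ Set.Ioo (0:ℝ) 1) (k : ℕ) :
    ContinuousAt (fun q => aq q k) q₀ := by
  have hden : Real.sqrt (1 - q₀ ^ (2 * (k + 1))) ≠ 0 := ne_of_gt (sqrt_pos' h k).2
  apply ContinuousAt.div
  · fun_prop
  · exact (Real.continuous_sqrt.comp (by continuity)).continuousAt
  · exact hden

lemma pow2_inj {q : ℝ} (hq : q ∈ Set.Ioo (0:ℝ) 1) {n m : ℕ}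
    (h : q ^ (2 * n) = q ^ (2 * m)) : n = m := by
  by_contra hne
  rcases Nat.lt_or_ge n m with hlt | hge
  · have := pow_lt_pow_right_of_lt_one₀ hq.1 hq.2 (by omega : 2 * n < 2 * m)
    linarith
  · have := pow_lt_pow_right_of_lt_one₀ hq.1 hq.2 (by omega : 2 * m < 2 * n)
    linarith

open Classical in
noncomputable def phi (q q₀ : ℝ) (x : Xq q) : Xq q₀ :=
  if h : ∃ n : ℕ, (x : ℝ) = q ^ (2 * n) then ⟨q₀ ^ (2 * h.choose), Or.inr ⟨h.choose, rfl⟩⟩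
  else ⟨0, Or.inl rfl⟩

lemma phi_pow {q q₀ : ℝ} (hq : q ∈ Set.Ioo (0:ℝ) 1) (x : Xq q) (n : ℕ)
    (hx : (x : ℝ) = q ^ (2 * n)) : (phi q q₀ x : ℝ) = q₀ ^ (2 * n) := by
  have h : ∃ m : ℕ, (x : ℝ) = q ^ (2 * m) := ⟨n, hx⟩
  rw [phi, dif_pos h]
  have hc : h.choose = n := pow2_inj hq (h.choose_spec.symm.trans hx)
  show q₀ ^ (2 * h.choose) = q₀ ^ (2 * n)
  exact congrArg (fun m => q₀ ^ (2 * m)) hc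

lemma phi_zero {q q₀ : ℝ} (hq : q ∈ Set.Ioo (0:ℝ) 1) (x : Xq q)
    (hx : (x : ℝ) = 0) : (phi q q₀ x : ℝ) = 0 := by
  rw [phi, dif_neg]
  rintro ⟨n, hn⟩
  rw [hx] at hn
  exact absurd hn.symm (ne_of_gt (pow_pos hq.1 _))

lemma Xq_cases {q : ℝ} (x : Xq q) : (x : ℝ) = 0 ∨ ∃ n : ℕ, (x : ℝ) = q ^ (2 * n) := x.2


/-- The map `q ↦ (X_q, d_q)` is continuous on `(0,1)` with respect to the Gromov–Hausdorff
distance: for every `q₀ ∈ (0,1)` and `ε > 0` there is `δ > 0` such that for every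
`q ∈ (0,1)` with `|q − q₀| < δ`, the Gromov–Hausdorff distance between `(X_q, d_q)` and
`(X_{q₀}, d_{q₀})` is less than `ε`.  Here, for each `q`, `M q` is a compact metric space
structure on `X_q` whose distance function, for `q ∈ (0,1)`, is the metric `d_q` (hypotheses
`hM_pow` and `hM_zero`; the remaining values of `d_q` are determined by symmetry and
`d_q(x,x) = 0`). -/
theorem stmt_13
    (M : ∀ q : ℝ, MetricSpace (Xq q))
    (hne : ∀ q : ℝ, Nonempty (Xq q))
    (hcpt : ∀ q : ℝ,
      @CompactSpace (Xq q) (M q).toPseudoMetricSpace.toUniformSpace.toTopologicalSpace)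
    (hM_pow : ∀ q ∈ Set.Ioo (0 : ℝ) 1, ∀ (x y : Xq q) (n m : ℕ), n ≠ m →
      (x : ℝ) = q ^ (2 * n) → (y : ℝ) = q ^ (2 * m) →
      @dist _ (M q).toPseudoMetricSpace.toDist x y =
        ∑ k ∈ Finset.Ico (min m n) (max m n),
          (1 - q ^ 2) * q ^ k / Real.sqrt (1 - q ^ (2 * (k + 1))))
    (hM_zero : ∀ q ∈ Set.Ioo (0 : ℝ) 1, ∀ (x y : Xq q) (n : ℕ),
      (x : ℝ) = q ^ (2 * n) → (y : ℝ) = 0 →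
      @dist _ (M q).toPseudoMetricSpace.toDist x y =
        ∑' k : ℕ, (1 - q ^ 2) * q ^ (n + k) / Real.sqrt (1 - q ^ (2 * (n + k + 1)))) :
    ∀ q₀ ∈ Set.Ioo (0 : ℝ) 1, ∀ ε > (0 : ℝ), ∃ δ > (0 : ℝ),
      ∀ q ∈ Set.Ioo (0 : ℝ) 1, |q - q₀| < δ →
        @GromovHausdorff.ghDist (Xq q) (Xq q₀)
          (M q) (hne q) (hcpt q) (M q₀) (hne q₀) (hcpt q₀) < ε := by
  intro q₀ hq₀ ε hε
  have hq₀0 := hq₀.1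
  have hq₀1 := hq₀.2
  set q₁ : ℝ := (1 + q₀) / 2 with hq₁def
  have hq₁0 : 0 < q₁ := by rw [hq₁def]; linarith
  have hq₁1 : q₁ < 1 := by rw [hq₁def]; linarith
  have hd0 : (0:ℝ) < (1 - q₀) / 2 := by linarith
  obtain ⟨N, hN⟩ := exists_pow_lt_of_lt_one
    (show (0:ℝ) < ε / 3 * ((1 - q₀) / 2) by positivity) hq₁1
  have hbig : q₁ ^ N / ((1 - q₀) / 2) < ε / 3 := by
    rw [div_lt_iff₀ hd0]; exact hN
  -- continuity of the finite part
  have hg : ContinuousAt (fun q => ∑ k ∈ Finset.range N, |aq q k - aq q₀ k|) q₀ := by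
    apply tendsto_finset_sum
    intro k _
    exact ((aq_continuousAt hq₀ k).sub continuousAt_const).abs
  obtain ⟨δ₁, hδ₁0, hδ₁⟩ := Metric.continuousAt_iff.1 hg (ε / 3) (by positivity)
  refine ⟨min δ₁ ((1 - q₀) / 2), lt_min hδ₁0 hd0, ?_⟩
  intro q hq hqd
  have hqd₁ : |q - q₀| < δ₁ := lt_of_lt_of_le hqd (min_le_left _ _)
  have hqd₂ : |q - q₀| < (1 - q₀) / 2 := lt_of_lt_of_le hqd (min_le_right _ _)
  have habs := abs_lt.1 hqd₂
  have hq_lt : q ≤ q₁ := by rw [hq₁def]; linarith [habs.2]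
  have h1q : (1 - q₀) / 2 ≤ 1 - q := by linarith [habs.2]
  have hgq : (∑ k ∈ Finset.range N, |aq q k - aq q₀ k|) < ε / 3 := by
    have h := hδ₁ (show dist q q₀ < δ₁ by rwa [Real.dist_eq])
    rw [Real.dist_eq] at h
    have h0 : (∑ k ∈ Finset.range N, |aq q₀ k - aq q₀ k|) = 0 := by simp
    rw [h0, sub_zero] at h
    exact lt_of_le_of_lt (le_abs_self _) h
  have htail_q : q ^ N / (1 - q) < ε / 3 :=
    lt_of_le_of_lt
      (div_le_div₀ (pow_nonneg hq₁0.le N) (pow_le_pow_left₀ hq.1.le hq_lt N) hd0 h1q) hbig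
  have htail_q₀ : q₀ ^ N / (1 - q₀) < ε / 3 :=
    lt_of_le_of_lt
      (div_le_div₀ (pow_nonneg hq₁0.le N)
        (pow_le_pow_left₀ hq₀0.le (by rw [hq₁def]; linarith) N) hd0 (by linarith)) hbig
  have hD : Dq q q₀ N < ε := by
    have := hgq; have := htail_q; have := htail_q₀
    unfold Dq; linarith
  have hDnn := Dq_nonneg hq hq₀ N
  -- distance comparison
  have Hb : ∀ x y : Xq q,
      |@dist _ (M q).toPseudoMetricSpace.toDist x y
        - @dist _ (M q₀).toPseudoMetricSpace.toDist (phi q q₀ x) (phi q q₀ y)|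
        ≤ Dq q q₀ N := by
    intro x y
    rcases Xq_cases x with hx | ⟨n, hx⟩ <;> rcases Xq_cases y with hy | ⟨m, hy⟩
    · have hxy : x = y := Subtype.ext (by rw [hx, hy])
      rw [hxy, @dist_self _ (M q).toPseudoMetricSpace,
        @dist_self _ (M q₀).toPseudoMetricSpace]
      simpa using hDnn
    · have d1 : @dist _ (M q).toPseudoMetricSpace.toDist x y = ∑' k : ℕ, aq q (m + k) := by
        rw [@dist_comm _ (M q).toPseudoMetricSpace x y]
        exact hM_zero q hq y x m hy hx
      have d2 : @dist _ (M q₀).toPseudoMetricSpace.toDist (phi q q₀ x) (phi q q₀ y)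
          = ∑' k : ℕ, aq q₀ (m + k) := by
        rw [@dist_comm _ (M q₀).toPseudoMetricSpace]
        exact hM_zero q₀ hq₀ _ _ m (phi_pow hq y m hy) (phi_zero hq x hx)
      rw [d1, d2]
      exact diff_tail_le hq hq₀ N m
    · have d1 : @dist _ (M q).toPseudoMetricSpace.toDist x y = ∑' k : ℕ, aq q (n + k) :=
        hM_zero q hq x y n hx hy
      have d2 : @dist _ (M q₀).toPseudoMetricSpace.toDist (phi q q₀ x) (phi q q₀ y)
          = ∑' k : ℕ, aq q₀ (n + k) :=
        hM_zero q₀ hq₀ _ _ n (phi_pow hq x n hx) (phi_zero hq y hy)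
      rw [d1, d2]
      exact diff_tail_le hq hq₀ N n
    · rcases eq_or_ne n m with rfl | hnm
      · have hxy : x = y := Subtype.ext (hx.trans hy.symm)
        rw [hxy, @dist_self _ (M q).toPseudoMetricSpace,
          @dist_self _ (M q₀).toPseudoMetricSpace]
        simpa using hDnn
      · have d1 : @dist _ (M q).toPseudoMetricSpace.toDist x y
            = ∑ k ∈ Finset.Ico (min m n) (max m n), aq q k :=
          hM_pow q hq x y n m hnm hx hy
        have d2 : @dist _ (M q₀).toPseudoMetricSpace.toDist (phi q q₀ x) (phi q q₀ y)
            = ∑ k ∈ Finset.Ico (min m n) (max m n), aq q₀ k :=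
          hM_pow q₀ hq₀ _ _ n m hnm (phi_pow hq x n hx) (phi_pow hq y m hy)
        rw [d1, d2]
        exact diff_Ico_le hq hq₀ N _ _
  -- apply the approximation lemma
  letI MX := M q
  letI MY := M q₀
  haveI := hne q
  haveI := hne q₀
  haveI := hcpt q
  haveI := hcpt q₀
  let Φ : ↥(Set.univ : Set ↥(Xq q)) → ↥(Xq q₀) := fun x => phi q q₀ x.1
  have hs : ∀ x : Xq q, ∃ y ∈ (Set.univ : Set (Xq q)),
      @dist _ (M q).toPseudoMetricSpace.toDist x y ≤ 0 := fun x =>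
    ⟨x, Set.mem_univ x, by rw [@dist_self _ (M q).toPseudoMetricSpace]⟩
  have hs' : ∀ y : Xq q₀, ∃ x : ↥(Set.univ : Set ↥(Xq q)),
      @dist _ (M q₀).toPseudoMetricSpace.toDist y (Φ x) ≤ 0 := by
    intro y
    rcases Xq_cases y with hy | ⟨m, hy⟩
    · refine ⟨⟨⟨(0:ℝ), Or.inl rfl⟩, Set.mem_univ _⟩, ?_⟩
      have hyy : y = Φ ⟨⟨(0:ℝ), Or.inl rfl⟩, Set.mem_univ _⟩ :=
        Subtype.ext (by rw [hy]; exact (phi_zero hq _ rfl).symm)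
      rw [← hyy, @dist_self _ (M q₀).toPseudoMetricSpace]
    · refine ⟨⟨⟨q ^ (2 * m), Or.inr ⟨m, rfl⟩⟩, Set.mem_univ _⟩, ?_⟩
      have hyy : y = Φ ⟨⟨q ^ (2 * m), Or.inr ⟨m, rfl⟩⟩, Set.mem_univ _⟩ :=
        Subtype.ext (by rw [hy]; exact (phi_pow hq _ m rfl).symm)
      rw [← hyy, @dist_self _ (M q₀).toPseudoMetricSpace]
  have H : ∀ x y : ↥(Set.univ : Set ↥(Xq q)),
      |@dist _ (M q).toPseudoMetricSpace.toDist (x : Xq q) (y : Xq q)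
        - @dist _ (M q₀).toPseudoMetricSpace.toDist (Φ x) (Φ y)| ≤ Dq q q₀ N :=
    fun x y => Hb x.1 y.1
  have key := @GromovHausdorff.ghDist_le_of_approx_subsets (Xq q) (M q) (hcpt q) (hne q)
    (Xq q₀) (M q₀) (hcpt q₀) (hne q₀) Set.univ Φ 0 (Dq q q₀ N) 0 hs hs' H
  refine lt_of_le_of_lt key ?_
  linarith
end
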